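/- In the forward direction of the previous factorization: if M = (1/|E|) R Λ^{-1} R^T + C U C^T with U symmetric positive definite and C injective with Im(C) = (Im N)^⊥, and R^T N = |E|Λ with Λ symmetric positive definite, then M is symmetric positive definite. -/

import Mathlib

open Matrix

/-- Forward direction of the factorization: if `M = (1/|E|) R Λ⁻¹ R^T + C U C^T`
with `U` symmetric positive definite, `C` injective with `ker(C^T) = Im(N)`,
`R` of rank `d` and `R^T N = |E| Λ` with `Λ` symmetric positive definite, then `M`
is symmetric positive definite. -/
theorem stmt15 (k d : ℕ) (hdk : d < k)
    (N R : Matrix (Fin k) (Fin d) ℝ) (hR : R.rank = d)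
    (Λ : Matrix (Fin d) (Fin d) ℝ) (hΛ : Λ.PosDef)
    (e : ℝ) (he : 0 < e) (hRN : Rᵀ * N = e • Λ)
    (C : Matrix (Fin k) (Fin (k - d)) ℝ)
    (hC : Function.Injective C.mulVecLin)
    (hCN : LinearMap.ker (Cᵀ).mulVecLin = LinearMap.range N.mulVecLin)
    (U : Matrix (Fin (k - d)) (Fin (k - d)) ℝ) (hU : U.PosDef) :
    (e⁻¹ • (R * Λ⁻¹ * Rᵀ) + C * U * Cᵀ).PosDef := by
  have hΛinv : (Λ⁻¹).PosDef := hΛ.inv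
  have hsemi1 : (R * Λ⁻¹ * Rᵀ).PosSemidef := by
    have := hΛinv.posSemidef.mul_mul_conjTranspose_same R
    simpa using this
  have hsemi2 : (C * U * Cᵀ).PosSemidef := by
    have := hU.posSemidef.mul_mul_conjTranspose_same C
    simpa using this
  have key1 : ∀ x : Fin k → ℝ, x ⬝ᵥ (R * Λ⁻¹ * Rᵀ).mulVec x
      = (Rᵀ.mulVec x) ⬝ᵥ Λ⁻¹.mulVec (Rᵀ.mulVec x) := by
    intro x
    rw [← Matrix.mulVec_mulVec, ← Matrix.mulVec_mulVec, Matrix.dotProduct_mulVec,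
      Matrix.mulVec_transpose]
  have key2 : ∀ x : Fin k → ℝ, x ⬝ᵥ (C * U * Cᵀ).mulVec x
      = (Cᵀ.mulVec x) ⬝ᵥ U.mulVec (Cᵀ.mulVec x) := by
    intro x
    rw [← Matrix.mulVec_mulVec, ← Matrix.mulVec_mulVec, Matrix.dotProduct_mulVec,
      Matrix.mulVec_transpose]
  rw [Matrix.posDef_iff_dotProduct_mulVec]
  constructor
  · have hΛT : Λ⁻¹ᵀ = Λ⁻¹ := by simpa using hΛinv.isHermitian.eq
    have hUT : Uᵀ = U := by simpa using hU.isHermitian.eq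
    simp [Matrix.IsHermitian, hΛT, hUT, Matrix.mul_assoc, Matrix.conjTranspose_add, Matrix.conjTranspose_smul,
      hsemi1.isHermitian.eq, hsemi2.isHermitian.eq]
  · intro x hx
    have hq : x ⬝ᵥ (e⁻¹ • (R * Λ⁻¹ * Rᵀ) + C * U * Cᵀ).mulVec x
        = e⁻¹ * ((Rᵀ.mulVec x) ⬝ᵥ Λ⁻¹.mulVec (Rᵀ.mulVec x))
          + (Cᵀ.mulVec x) ⬝ᵥ U.mulVec (Cᵀ.mulVec x) := by
      rw [Matrix.add_mulVec, dotProduct_add, Matrix.smul_mulVec,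
        dotProduct_smul, key1, key2, smul_eq_mul]
    rw [star_trivial]
    by_cases hRx : Rᵀ.mulVec x = 0
    · have hCx : Cᵀ.mulVec x ≠ 0 := by
        intro h0
        have hmem : x ∈ LinearMap.ker (Cᵀ).mulVecLin := h0
        rw [hCN] at hmem
        obtain ⟨y, hy⟩ := hmem
        have hy' : N.mulVec y = x := hy
        have h1 : Rᵀ.mulVec (N.mulVec y) = 0 := by rw [hy']; exact hRx
        rw [Matrix.mulVec_mulVec, hRN] at h1
        have h2 : Λ.mulVec y = 0 := by
          have : e • Λ.mulVec y = 0 := by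
            simpa [Matrix.smul_mulVec] using h1
          simpa [he.ne'] using smul_eq_zero.mp this
        have hy0 : y = 0 := by
          by_contra hy0
          have := hΛ.dotProduct_mulVec_pos hy0
          rw [h2] at this
          simp at this
        apply hx
        rw [← hy', hy0, Matrix.mulVec_zero]
      have h2 : 0 < (Cᵀ.mulVec x) ⬝ᵥ U.mulVec (Cᵀ.mulVec x) := by
        simpa using hU.dotProduct_mulVec_pos hCx
      rw [hq, hRx]
      simpa using h2
    · have h1 : 0 < (Rᵀ.mulVec x) ⬝ᵥ Λ⁻¹.mulVec (Rᵀ.mulVec x) := by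
        simpa using hΛinv.dotProduct_mulVec_pos hRx
      have h2 : 0 ≤ (Cᵀ.mulVec x) ⬝ᵥ U.mulVec (Cᵀ.mulVec x) := by
        simpa using hU.posSemidef.dotProduct_mulVec_nonneg (Cᵀ.mulVec x)
      rw [hq]
      positivity
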